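/- Let α ∈ (0,1) and β ∈ (0,1] with β ≥ α. Then E_{α,β}(w) ≤ 1/Γ(β) for all w ≤ 0, and in particular E_{α,1}(w) ≤ 1 for all w ≤ 0. -/

import Mathlib

/-- Real two-parameter Mittag-Leffler function. -/
noncomputable def mittagLefflerR (α β w : ℝ) : ℝ :=
  ∑' k : ℕ, w ^ k / Real.Gamma (β + α * k)

open Real MeasureTheory Set Filter

namespace MLaux

/-- Gamma ratio lower bound from log-convexity. -/
lemma Gamma_ratio {α : ℝ} (hα : 0 < α) (hα1 : α ≤ 1) {y : ℝ} (hy : 1 ≤ y) :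
    (y + α - 1) ^ α * Real.Gamma y ≤ Real.Gamma (y + α) := by
  have hy0 : 0 < y := lt_of_lt_of_le one_pos hy
  have hz : 0 < y + α - 1 := by linarith
  have hkey : Real.log (Real.Gamma y) ≤
      (1 - α) * Real.log (Real.Gamma (y + α)) + α * Real.log (Real.Gamma (y + α - 1)) := by
    have h := Real.convexOn_log_Gamma.2 (mem_Ioi.2 (by linarith : (0:ℝ) < y + α))
      (mem_Ioi.2 hz) (by linarith : 0 ≤ 1 - α) hα.le (by ring)
    have he : (1 - α) • (y + α) + α • (y + α - 1) = y := by simp [smul_eq_mul]; ring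
    rw [he] at h
    simpa [Function.comp, smul_eq_mul] using h
  have hrec : Real.Gamma (y + α) = (y + α - 1) * Real.Gamma (y + α - 1) := by
    have := Real.Gamma_add_one (ne_of_gt hz)
    rw [show y + α - 1 + 1 = y + α by ring] at this
    exact this
  have hG1 : 0 < Real.Gamma (y + α) := Real.Gamma_pos_of_pos (by linarith)
  have hG2 : 0 < Real.Gamma (y + α - 1) := Real.Gamma_pos_of_pos hz
  have hGy : 0 < Real.Gamma y := Real.Gamma_pos_of_pos hy0
  have hlog2 : Real.log (Real.Gamma (y + α - 1)) =
      Real.log (Real.Gamma (y + α)) - Real.log (y + α - 1) := by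
    rw [hrec, Real.log_mul (ne_of_gt hz) (ne_of_gt hG2)]; ring
  rw [hlog2] at hkey
  have : Real.log ((y + α - 1) ^ α * Real.Gamma y) ≤ Real.log (Real.Gamma (y + α)) := by
    rw [Real.log_mul (by positivity) (ne_of_gt hGy), Real.log_rpow hz]
    nlinarith [hkey]
  calc (y + α - 1) ^ α * Real.Gamma y
      = Real.exp (Real.log ((y + α - 1) ^ α * Real.Gamma y)) := by
        rw [Real.exp_log (by positivity)]
    _ ≤ Real.exp (Real.log (Real.Gamma (y + α))) := Real.exp_le_exp.2 this
    _ = Real.Gamma (y + α) := Real.exp_log hG1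

lemma summable_abs_ML {α : ℝ} (hα : 0 < α) (hα1 : α ≤ 1) {β : ℝ} (hβ : 0 < β) (x : ℝ) :
    Summable (fun k : ℕ => |x| ^ k / Real.Gamma (β + α * k)) := by
  have htend : Tendsto (fun k : ℕ => β + α * k) atTop atTop := by
    apply tendsto_atTop_add_const_left
    exact (tendsto_natCast_atTop_atTop (R := ℝ)).const_mul_atTop hα
  have hev : ∀ᶠ k : ℕ in atTop, max 1 ((2 * |x| + 1) ^ (α⁻¹)) + 1 ≤ β + α * k :=
    htend.eventually_ge_atTop _
  refine summable_of_ratio_norm_eventually_le (r := 1/2) (by norm_num) ?_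
  filter_upwards [hev] with k hk
  set y := β + α * k with hy
  have hy1 : 1 ≤ y := by
    have : (1:ℝ) ≤ max 1 ((2 * |x| + 1) ^ (α⁻¹)) := le_max_left _ _
    linarith
  have hGy : 0 < Real.Gamma y := Real.Gamma_pos_of_pos (by linarith)
  have hGya : 0 < Real.Gamma (y + α) := Real.Gamma_pos_of_pos (by linarith)
  have hpow : (2 * |x| + 1) ≤ (y + α - 1) ^ α := by
    have hb : (2 * |x| + 1) ^ (α⁻¹) ≤ y + α - 1 := by
      have : (2 * |x| + 1) ^ (α⁻¹) ≤ max 1 ((2 * |x| + 1) ^ (α⁻¹)) := le_max_right _ _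
      linarith
    calc (2 * |x| + 1) = ((2 * |x| + 1) ^ (α⁻¹)) ^ α :=
          (Real.rpow_inv_rpow (by positivity) (ne_of_gt hα)).symm
      _ ≤ (y + α - 1) ^ α := Real.rpow_le_rpow (by positivity) hb hα.le
  have hGrat : (2 * |x| + 1) * Real.Gamma y ≤ Real.Gamma (y + α) := by
    calc (2 * |x| + 1) * Real.Gamma y ≤ (y + α - 1) ^ α * Real.Gamma y := by
          apply mul_le_mul_of_nonneg_right hpow hGy.le
      _ ≤ Real.Gamma (y + α) := Gamma_ratio hα hα1 hy1
  have hcast : β + α * ((k : ℕ) + 1 : ℕ) = y + α := by push_cast; ring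
  rw [hcast]
  have h1 : |x| ^ (k+1) / Real.Gamma (y + α) ≤ |x| ^ (k+1) / ((2 * |x| + 1) * Real.Gamma y) := by
    apply div_le_div_of_nonneg_left (by positivity) (by positivity) hGrat
  have h2 : |x| ^ (k+1) / ((2 * |x| + 1) * Real.Gamma y) ≤ 1/2 * (|x| ^ k / Real.Gamma y) := by
    rw [pow_succ]
    rw [div_le_iff₀ (c := (2 * |x| + 1) * Real.Gamma y) (by positivity)] at *
    have : |x| ≤ 1/2 * (2 * |x| + 1) := by nlinarith [abs_nonneg x]
    calc |x| ^ k * |x| ≤ |x| ^ k * (1/2 * (2 * |x| + 1)) :=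
          mul_le_mul_of_nonneg_left this (by positivity)
      _ = 1/2 * (|x| ^ k / Real.Gamma y) * ((2 * |x| + 1) * Real.Gamma y) := by
          field_simp
  rw [Real.norm_eq_abs, Real.norm_eq_abs,
    abs_of_nonneg (div_nonneg (pow_nonneg (abs_nonneg x) _) hGya.le),
    abs_of_nonneg (div_nonneg (pow_nonneg (abs_nonneg x) _) hGy.le)]
  exact le_trans h1 h2


lemma summable_ML {α : ℝ} (hα : 0 < α) (hα1 : α ≤ 1) {β : ℝ} (hβ : 0 < β) (x : ℝ) :
    Summable (fun k : ℕ => x ^ k / Real.Gamma (β + α * k)) := by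
  refine Summable.of_norm_bounded (summable_abs_ML hα hα1 hβ x) (fun k => ?_)
  have hG : 0 < Real.Gamma (β + α * k) := Real.Gamma_pos_of_pos (by positivity)
  rw [norm_div, norm_pow, Real.norm_eq_abs, Real.norm_eq_abs, abs_of_pos hG]

lemma ML_shift {α : ℝ} (hα : 0 < α) (hα1 : α ≤ 1) {β : ℝ} (hβ : 0 < β) (w : ℝ) :
    mittagLefflerR α β w = 1 / Real.Gamma β + w * mittagLefflerR α (β + α) w := by
  have hs := summable_ML hα hα1 hβ w
  rw [mittagLefflerR, hs.tsum_eq_zero_add]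
  congr 1
  · norm_num
  · rw [mittagLefflerR, ← tsum_mul_left]
    congr 1; funext k
    have harg : β + α * ((k : ℕ) + 1 : ℕ) = (β + α) + α * k := by push_cast; ring
    rw [harg, pow_succ]
    ring

lemma ML_zero (α β : ℝ) : mittagLefflerR α β 0 = 1 / Real.Gamma β := by
  rw [mittagLefflerR, tsum_eq_single 0 (fun k hk => by simp [zero_pow hk])]
  norm_num

lemma ML_contOn {α : ℝ} (hα : 0 < α) (hα1 : α ≤ 1) {β : ℝ} (hβ : 0 < β) {T : ℝ} (hT : 0 < T) :
    ContinuousOn (fun t : ℝ => mittagLefflerR α β (-(t ^ α))) (Icc 0 T) := by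
  have key : ContinuousOn (fun t : ℝ => ∑' k : ℕ, (-(t ^ α)) ^ k / Real.Gamma (β + α * k))
      (Icc 0 T) := by
    refine continuousOn_tsum (f := fun (k : ℕ) (t : ℝ) => (-(t ^ α)) ^ k / Real.Gamma (β + α * k))
      (fun k => ?_) (summable_abs_ML hα hα1 hβ (T ^ α)) (fun k t ht => ?_)
    · have hc : ContinuousOn (fun t : ℝ => t ^ α) (Icc 0 T) := fun t _ =>
        (Real.continuousAt_rpow_const t α (Or.inr hα.le)).continuousWithinAt
      exact (((hc.neg).pow k).div_const _)
    · have hG : 0 < Real.Gamma (β + α * k) := Real.Gamma_pos_of_pos (by positivity)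
      rw [Real.norm_eq_abs, abs_div, abs_of_pos hG, abs_pow, abs_neg,
        abs_of_nonneg (Real.rpow_nonneg ht.1 α)]
      rw [div_le_div_iff_of_pos_right hG]
      have hTa : t ^ α ≤ |T ^ α| := by
        rw [abs_of_nonneg (Real.rpow_nonneg hT.le α)]
        exact Real.rpow_le_rpow ht.1 ht.2 hα.le
      exact pow_le_pow_left₀ (Real.rpow_nonneg ht.1 α) hTa k
  exact key


lemma beta_contOn {a b t : ℝ} : ContinuousOn
    (fun s : ℝ => (t - s) ^ (a - 1) * s ^ (b - 1)) (Ioo 0 t) := by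
  intro s hs
  have h1 : ContinuousAt (fun s : ℝ => (t - s) ^ (a - 1)) s := by
    have : ContinuousAt (fun y : ℝ => y ^ (a - 1)) (t - s) :=
      Real.continuousAt_rpow_const _ _ (Or.inl (by linarith [hs.2] : t - s ≠ 0))
    exact this.comp (continuousAt_const.sub continuousAt_id)
  have h2 : ContinuousAt (fun s : ℝ => s ^ (b - 1)) s :=
    Real.continuousAt_rpow_const _ _ (Or.inl hs.1.ne')
  exact (h1.mul h2).continuousWithinAt

lemma beta_integrable {a b : ℝ} (ha : 0 < a) (ha1 : a ≤ 1) (hb : 0 < b) {t : ℝ} (ht : 0 < t) :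
    IntegrableOn (fun s : ℝ => (t - s) ^ (a - 1) * s ^ (b - 1)) (Ioc 0 t) := by
  have h1 : IntegrableOn (fun s : ℝ => (t - s) ^ (a - 1) * s ^ (b - 1)) (Ioc 0 (t/2)) := by
    have hint : IntegrableOn (fun s : ℝ => s ^ (b - 1)) (Ioc 0 (t/2)) := by
      have := intervalIntegral.intervalIntegrable_rpow' (a := 0) (b := t/2)
        (r := b - 1) (by linarith)
      rw [intervalIntegrable_iff_integrableOn_Ioc_of_le (by linarith)] at this
      exact this
    have hcont : ContinuousOn (fun s : ℝ => (t - s) ^ (a - 1) * s ^ (b - 1)) (Ioc 0 (t/2)) :=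
      beta_contOn.mono (fun s hs => ⟨hs.1, by linarith [hs.2]⟩)
    refine Integrable.mono' (hint.const_mul ((t/2) ^ (a - 1)))
      (hcont.aestronglyMeasurable measurableSet_Ioc) ?_
    filter_upwards [ae_restrict_mem measurableSet_Ioc] with s hs
    have hs0 : 0 < s := hs.1
    have hts : t / 2 ≤ t - s := by linarith [hs.2]
    rw [Real.norm_eq_abs, abs_mul, abs_of_nonneg (Real.rpow_nonneg (by linarith) _),
      abs_of_nonneg (Real.rpow_nonneg hs0.le _)]
    apply mul_le_mul_of_nonneg_right ?_ (Real.rpow_nonneg hs0.le _)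
    exact Real.rpow_le_rpow_of_nonpos (by linarith) hts (by linarith)
  have h2 : IntegrableOn (fun s : ℝ => (t - s) ^ (a - 1) * s ^ (b - 1)) (Ioc (t/2) t) := by
    rw [integrableOn_Ioc_iff_integrableOn_Ioo]
    have hint : IntegrableOn (fun s : ℝ => (t - s) ^ (a - 1)) (Ioo (t/2) t) := by
      have h0 : IntervalIntegrable (fun x : ℝ => x ^ (a - 1)) volume 0 (t/2) :=
        intervalIntegral.intervalIntegrable_rpow' (by linarith)
      have h3 := (h0.comp_sub_left t).symm
      rw [show t - t/2 = t/2 by ring, sub_zero] at h3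
      rw [intervalIntegrable_iff_integrableOn_Ioc_of_le (by linarith)] at h3
      rw [← integrableOn_Ioc_iff_integrableOn_Ioo]
      simpa using h3
    set C : ℝ := max ((t/2) ^ (b - 1)) (t ^ (b - 1)) with hC
    have hcont : ContinuousOn (fun s : ℝ => (t - s) ^ (a - 1) * s ^ (b - 1)) (Ioo (t/2) t) :=
      beta_contOn.mono (fun s hs => ⟨by linarith [hs.1], hs.2⟩)
    refine Integrable.mono' (hint.mul_const C)
      (hcont.aestronglyMeasurable measurableSet_Ioo) ?_
    filter_upwards [ae_restrict_mem measurableSet_Ioo] with s hs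
    have hs0 : 0 < s := lt_trans (by linarith) hs.1
    rw [Real.norm_eq_abs, abs_mul, abs_of_nonneg (Real.rpow_nonneg (by linarith [hs.2]) _),
      abs_of_nonneg (Real.rpow_nonneg hs0.le _)]
    apply mul_le_mul_of_nonneg_left ?_ (Real.rpow_nonneg (by linarith [hs.2]) _)
    rcases le_or_gt b 1 with hb1 | hb1
    · exact le_trans (Real.rpow_le_rpow_of_nonpos (by linarith) hs.1.le (by linarith))
        (le_max_left _ _)
    · exact le_trans (Real.rpow_le_rpow hs0.le hs.2.le (by linarith)) (le_max_right _ _)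
  have := h1.union h2
  rwa [Set.Ioc_union_Ioc_eq_Ioc (by linarith) (by linarith)] at this

lemma beta_value {a b : ℝ} (ha : 0 < a) (hb : 0 < b) {t : ℝ} (ht : 0 < t) :
    ∫ s in Ioo 0 t, (t - s) ^ (a - 1) * s ^ (b - 1) =
      Real.Gamma a * Real.Gamma b / Real.Gamma (a + b) * t ^ (a + b - 1) := by
  have hsc := Complex.betaIntegral_scaled (b : ℂ) (a : ℂ) ht
  have hre : (∫ x in (0:ℝ)..t, (x : ℂ) ^ ((b : ℂ) - 1) * ((t : ℂ) - x) ^ ((a : ℂ) - 1)) =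
      ((∫ x in (0:ℝ)..t, x ^ (b - 1) * (t - x) ^ (a - 1) : ℝ) : ℂ) := by
    rw [← intervalIntegral.integral_ofReal]
    apply intervalIntegral.integral_congr
    intro x hx
    rw [Set.uIcc_of_le ht.le] at hx
    dsimp only
    rw [Complex.ofReal_mul, Complex.ofReal_cpow hx.1,
      Complex.ofReal_cpow (by linarith [hx.2] : (0:ℝ) ≤ t - x)]
    push_cast
    ring
  have hab : Complex.Gamma ((b : ℂ) + (a : ℂ)) ≠ 0 := by
    rw [← Complex.ofReal_add, Complex.Gamma_ofReal]
    simpa using (Real.Gamma_pos_of_pos (by linarith : (0:ℝ) < b + a)).ne'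
  have hbeta : Complex.betaIntegral (b : ℂ) (a : ℂ) =
      ((Real.Gamma a * Real.Gamma b / Real.Gamma (a + b) : ℝ) : ℂ) := by
    have hG := Complex.Gamma_mul_Gamma_eq_betaIntegral
      (s := (b : ℂ)) (t := (a : ℂ)) (by simpa using hb) (by simpa using ha)
    have : Complex.betaIntegral (b : ℂ) (a : ℂ) =
        Complex.Gamma (b : ℂ) * Complex.Gamma (a : ℂ) / Complex.Gamma ((b : ℂ) + (a : ℂ)) := by
      rw [eq_div_iff hab, mul_comm, ← hG]
    rw [this, ← Complex.ofReal_add, Complex.Gamma_ofReal, Complex.Gamma_ofReal,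
      Complex.Gamma_ofReal, show b + a = a + b from add_comm b a]
    push_cast
    ring
  have htpow : ((t : ℂ) ^ ((b : ℂ) + (a : ℂ) - 1)) = ((t ^ (a + b - 1) : ℝ) : ℂ) := by
    rw [show ((b:ℂ) + (a:ℂ) - 1) = (((a + b - 1 : ℝ)) : ℂ) by push_cast; ring,
      Complex.ofReal_cpow ht.le]
  rw [hre, hbeta, htpow, ← Complex.ofReal_mul] at hsc
  have hmain : (∫ x in (0:ℝ)..t, x ^ (b - 1) * (t - x) ^ (a - 1) : ℝ) =
      t ^ (a + b - 1) * (Real.Gamma a * Real.Gamma b / Real.Gamma (a + b)) := by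
    exact_mod_cast hsc
  rw [intervalIntegral.integral_of_le ht.le, integral_Ioc_eq_integral_Ioo] at hmain
  calc ∫ s in Ioo 0 t, (t - s) ^ (a - 1) * s ^ (b - 1)
      = ∫ s in Ioo 0 t, s ^ (b - 1) * (t - s) ^ (a - 1) := by
        congr 1; funext s; ring
    _ = _ := by rw [hmain]; ring

lemma star {α β : ℝ} (hα : 0 < α) (hα1 : α < 1) (hβ : 0 < β) {t : ℝ} (ht : 0 < t) :
    ∫ s in Ioo 0 t, (t - s) ^ (α - 1) * s ^ (β - 1) * mittagLefflerR α β (-(s ^ α)) =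
      Real.Gamma α * t ^ (α + β - 1) * mittagLefflerR α (β + α) (-(t ^ α)) := by
  set F : ℕ → ℝ → ℝ := fun k s =>
    (t - s) ^ (α - 1) * s ^ (β - 1) * ((-(s ^ α)) ^ k / Real.Gamma (β + α * k)) with hF
  set G : ℕ → ℝ → ℝ := fun k s =>
    ((-1 : ℝ) ^ k / Real.Gamma (β + α * k)) * ((t - s) ^ (α - 1) * s ^ (β + α * k - 1)) with hG
  have hbk : ∀ k : ℕ, (0 : ℝ) < β + α * k := fun k => by positivity
  have hFG : ∀ k : ℕ, EqOn (G k) (F k) (Ioo 0 t) := by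
    intro k s hs
    have hs0 : 0 < s := hs.1
    have h1 : (-(s ^ α)) ^ k = (-1 : ℝ) ^ k * s ^ (α * k) := by
      rw [neg_pow, ← Real.rpow_natCast (s ^ α) k, ← Real.rpow_mul hs0.le]
    have h2 : s ^ (β + α * (k:ℕ) - 1) = s ^ (β - 1) * s ^ (α * (k:ℕ)) := by
      rw [show β + α * (k:ℕ) - 1 = (β - 1) + α * (k:ℕ) by ring, Real.rpow_add hs0]
    simp only [hF, hG, h1, h2]
    ring
  have hGint : ∀ k : ℕ, IntegrableOn (G k) (Ioo 0 t) := by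
    intro k
    exact (((beta_integrable hα hα1.le (hbk k) ht).mono_set Ioo_subset_Ioc_self).const_mul _)
  have hFint : ∀ k : ℕ, IntegrableOn (F k) (Ioo 0 t) :=
    fun k => (hGint k).congr_fun (hFG k) measurableSet_Ioo
  have htak : ∀ k : ℕ, t ^ (α + β + α * k - 1) = t ^ (α + β - 1) * (t ^ α) ^ k := by
    intro k
    rw [← Real.rpow_natCast (t ^ α) k, ← Real.rpow_mul ht.le, ← Real.rpow_add ht]
    norm_cast
    ring_nf
  have hGval : ∀ k : ℕ, (∫ s in Ioo 0 t, G k s) =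
      Real.Gamma α * t ^ (α + β - 1) * ((-(t ^ α)) ^ k / Real.Gamma ((β + α) + α * k)) := by
    intro k
    rw [hG]
    simp only
    rw [MeasureTheory.integral_const_mul, beta_value hα (hbk k) ht]
    have harg : α + (β + α * k) = (β + α) + α * k := by ring
    have hGpos := Real.Gamma_pos_of_pos (hbk k)
    have hGpos2 := Real.Gamma_pos_of_pos (show (0:ℝ) < (β + α) + α * k by positivity)
    rw [harg, show β + α + α * (k:ℕ) - 1 = α + β + α * (k:ℕ) - 1 by ring, htak k]
    have hneg : (-(t ^ α)) ^ k = (-1 : ℝ) ^ k * (t ^ α) ^ k := by rw [neg_pow]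
    rw [hneg]
    field_simp
  have hnorm : ∀ k : ℕ, (∫ s in Ioo 0 t, ‖F k s‖) =
      Real.Gamma α * t ^ (α + β - 1) * ((t ^ α) ^ k / Real.Gamma ((β + α) + α * k)) := by
    intro k
    have hGpos := Real.Gamma_pos_of_pos (hbk k)
    have : EqOn (fun s => (1 / Real.Gamma (β + α * k)) * ((t - s) ^ (α - 1) * s ^ (β + α * k - 1)))
        (fun s => ‖F k s‖) (Ioo 0 t) := by
      intro s hs
      dsimp only
      rw [← hFG k hs]
      simp only [hG, Real.norm_eq_abs, abs_mul, abs_div, abs_pow, abs_neg, abs_one, one_pow,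
        abs_of_pos hGpos, abs_of_nonneg (Real.rpow_nonneg (by linarith [hs.2] : (0:ℝ) ≤ t - s) _),
        abs_of_nonneg (Real.rpow_nonneg hs.1.le _)]
    rw [← MeasureTheory.setIntegral_congr_fun measurableSet_Ioo this,
      MeasureTheory.integral_const_mul, beta_value hα (hbk k) ht]
    have harg : α + (β + α * k) = (β + α) + α * k := by ring
    have hGpos2 := Real.Gamma_pos_of_pos (show (0:ℝ) < (β + α) + α * k by positivity)
    rw [harg, show β + α + α * (k:ℕ) - 1 = α + β + α * (k:ℕ) - 1 by ring, htak k]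
    field_simp
  have hsum : Summable (fun k : ℕ => ∫ s in Ioo 0 t, ‖F k s‖) := by
    rw [funext hnorm]
    exact (summable_ML hα hα1.le (by positivity : (0:ℝ) < β + α) (t ^ α)).mul_left _
  have key := MeasureTheory.integral_tsum_of_summable_integral_norm
    (μ := volume.restrict (Ioo 0 t)) (fun k => hFint k) hsum
  have hlhs : (∫ s in Ioo 0 t, ∑' k : ℕ, F k s) =
      ∫ s in Ioo 0 t, (t - s) ^ (α - 1) * s ^ (β - 1) * mittagLefflerR α β (-(s ^ α)) := by
    congr 1
    funext s
    rw [mittagLefflerR, ← tsum_mul_left]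
  have hrhs : (∑' k : ℕ, ∫ s in Ioo 0 t, F k s) =
      Real.Gamma α * t ^ (α + β - 1) * mittagLefflerR α (β + α) (-(t ^ α)) := by
    rw [mittagLefflerR, ← tsum_mul_left]
    congr 1
    funext k
    rw [← hGval k]
    exact MeasureTheory.setIntegral_congr_fun measurableSet_Ioo (fun s hs => (hFG k hs).symm)
  rw [← hlhs, ← key, hrhs]

lemma kernel_mono {α β : ℝ} (hα : 0 < α) (hα1 : α < 1) (hβ : 0 < β) (hβ1 : β ≤ 1)
    (hαβ : α ≤ β) {s t t' : ℝ} (hs : 0 < s) (hst : s < t) (htt' : t ≤ t') :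
    t' ^ (1 - β) * (t' - s) ^ (α - 1) ≤ t ^ (1 - β) * (t - s) ^ (α - 1) := by
  have ht : 0 < t := lt_trans hs hst
  have ht' : 0 < t' := lt_of_lt_of_le ht htt'
  have ha : 0 < t - s := by linarith
  have ha' : 0 < t' - s := by linarith
  have key : (t' / t) ^ (1 - β) ≤ ((t' - s) / (t - s)) ^ (1 - α) := by
    have h1 : t' / t ≤ (t' - s) / (t - s) := by
      rw [div_le_div_iff₀ ht ha]
      nlinarith
    have h2 : (1 : ℝ) ≤ (t' - s) / (t - s) := by
      rw [le_div_iff₀ ha]; linarith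
    calc (t' / t) ^ (1 - β) ≤ ((t' - s) / (t - s)) ^ (1 - β) :=
          Real.rpow_le_rpow (by positivity) h1 (by linarith)
      _ ≤ ((t' - s) / (t - s)) ^ (1 - α) :=
          Real.rpow_le_rpow_of_exponent_le h2 (by linarith)
  rw [Real.div_rpow ht'.le ht.le, Real.div_rpow ha'.le ha.le] at key
  rw [div_le_div_iff₀ (by positivity) (by positivity)] at key
  have e1 : (t' - s) ^ (α - 1) = ((t' - s) ^ (1 - α))⁻¹ := by
    rw [show α - 1 = -(1 - α) by ring, Real.rpow_neg ha'.le]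
  have e2 : (t - s) ^ (α - 1) = ((t - s) ^ (1 - α))⁻¹ := by
    rw [show α - 1 = -(1 - α) by ring, Real.rpow_neg ha.le]
  rw [e1, e2, ← div_eq_mul_inv, ← div_eq_mul_inv, div_le_div_iff₀ (by positivity) (by positivity)]
  linarith [key]

set_option maxHeartbeats 1000000 in
theorem sigma_nonneg {α β : ℝ} (hα : 0 < α) (hα1 : α < 1) (hβ : 0 < β) (hβ1 : β ≤ 1)
    (hαβ : α ≤ β) : ∀ t : ℝ, 0 ≤ t → 0 ≤ mittagLefflerR α β (-(t ^ α)) := by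
  set σ : ℝ → ℝ := fun t => mittagLefflerR α β (-(t ^ α)) with hσdef
  have hGα : 0 < Real.Gamma α := Real.Gamma_pos_of_pos hα
  have hGβ : 0 < Real.Gamma β := Real.Gamma_pos_of_pos hβ
  have hσ0 : σ 0 = 1 / Real.Gamma β := by
    rw [hσdef]
    simp only [Real.zero_rpow hα.ne', neg_zero, ML_zero α β]
  -- the integral equation
  set I : ℝ → ℝ := fun t => ∫ s in Ioo 0 t, (t - s) ^ (α - 1) * s ^ (β - 1) * σ s with hIdef
  have hEq : ∀ t : ℝ, 0 < t →
      σ t = 1 / Real.Gamma β - (1 / Real.Gamma α) * (t ^ (1 - β) * I t) := by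
    intro t ht
    have hpow : t ^ (1 - β) * t ^ (α + β - 1) = t ^ α := by
      rw [← Real.rpow_add ht]; congr 1; ring
    set M : ℝ := mittagLefflerR α (β + α) (-(t ^ α)) with hMdef
    have hIt : I t = Real.Gamma α * t ^ (α + β - 1) * M := star hα hα1 hβ ht
    have hshift : σ t = 1 / Real.Gamma β + (-(t ^ α)) * M := ML_shift hα hα1.le hβ (-(t ^ α))
    rw [hshift, hIt]
    have hre : (1 / Real.Gamma α) * (t ^ (1 - β) * (Real.Gamma α * t ^ (α + β - 1) * M)) =
        t ^ α * M := by
      rw [show t ^ (1 - β) * (Real.Gamma α * t ^ (α + β - 1) * M) =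
        Real.Gamma α * ((t ^ (1 - β) * t ^ (α + β - 1)) * M) by ring, hpow]
      field_simp
    rw [hre]
    ring
  -- suppose not
  by_contra hcon
  push_neg at hcon
  obtain ⟨b, hb0, hbneg⟩ := hcon
  set S : Set ℝ := {t : ℝ | 0 ≤ t ∧ σ t < 0} with hSdef
  have hSne : S.Nonempty := ⟨b, hb0, hbneg⟩
  have hSbdd : BddBelow S := ⟨0, fun x hx => hx.1⟩
  set τ : ℝ := sInf S with hτdef
  have hτ0 : 0 ≤ τ := le_csInf hSne (fun x hx => hx.1)
  have hcont : ContinuousOn σ (Icc 0 (τ + 1)) := ML_contOn hα hα1.le hβ (by linarith)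
  have hτmem : τ ∈ Icc 0 (τ + 1) := ⟨hτ0, by linarith⟩
  -- σ τ ≤ 0
  have hτle : σ τ ≤ 0 := by
    by_contra hpos
    push_neg at hpos
    have hcw := hcont τ hτmem
    have hev : σ ⁻¹' (Ioi 0) ∈ nhdsWithin τ (Icc 0 (τ + 1)) := hcw (Ioi_mem_nhds hpos)
    rw [Metric.mem_nhdsWithin_iff] at hev
    obtain ⟨ε, hε, hsub⟩ := hev
    obtain ⟨x, hxS, hxlt⟩ := (csInf_lt_iff hSbdd hSne).1
      (show τ < τ + min ε 1 by have := lt_min hε one_pos; linarith)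
    have hxτ : τ ≤ x := csInf_le hSbdd hxS
    have hxmem : x ∈ Metric.ball τ ε ∩ Icc 0 (τ + 1) := by
      constructor
      · rw [Metric.mem_ball, Real.dist_eq, abs_of_nonneg (by linarith)]
        have : min ε 1 ≤ ε := min_le_left _ _
        linarith
      · exact ⟨hxS.1, by have : min ε 1 ≤ 1 := min_le_right _ _; linarith⟩
    have : (0:ℝ) < σ x := hsub hxmem
    linarith [hxS.2]
  have hτpos : 0 < τ := by
    rcases eq_or_lt_of_le hτ0 with h | h
    · exfalso
      rw [← h] at hτle
      rw [hσ0] at hτle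
      have : 0 < 1 / Real.Gamma β := by positivity
      linarith
    · exact h
  -- σ τ ≥ 0
  have hτge : 0 ≤ σ τ := by
    by_contra hneg
    push_neg at hneg
    have hcw := hcont τ hτmem
    have hev : σ ⁻¹' (Iio 0) ∈ nhdsWithin τ (Icc 0 (τ + 1)) := hcw (Iio_mem_nhds hneg)
    rw [Metric.mem_nhdsWithin_iff] at hev
    obtain ⟨ε, hε, hsub⟩ := hev
    set p : ℝ := τ - min τ ε / 2 with hpdef
    have hminpos : 0 < min τ ε := lt_min hτpos hε
    have hpτ : p < τ := by rw [hpdef]; linarith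
    have hp0 : 0 ≤ p := by
      rw [hpdef]
      have : min τ ε ≤ τ := min_le_left _ _
      linarith
    have hpmem : p ∈ Metric.ball τ ε ∩ Icc 0 (τ + 1) := by
      constructor
      · rw [Metric.mem_ball, Real.dist_eq, abs_of_nonpos (by rw [hpdef]; linarith)]
        have : min τ ε ≤ ε := min_le_right _ _
        rw [hpdef]
        linarith
      · exact ⟨hp0, by linarith⟩
    have hpneg : σ p < 0 := hsub hpmem
    have : τ ≤ p := csInf_le hSbdd ⟨hp0, hpneg⟩
    linarith
  -- σ ≥ 0 on [0, τ]
  have hnn : ∀ x : ℝ, 0 ≤ x → x ≤ τ → 0 ≤ σ x := by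
    intro x hx0 hxτ
    rcases eq_or_lt_of_le hxτ with h | h
    · rw [h]; exact hτge
    · by_contra hneg
      push_neg at hneg
      have : τ ≤ x := csInf_le hSbdd ⟨hx0, hneg⟩
      linarith
  -- choose δ
  set ν : ℝ := (α * Real.Gamma α / 4) ^ (α⁻¹) with hνdef
  have hνpos : 0 < ν := Real.rpow_pos_of_pos (by positivity) _
  set δ : ℝ := min τ (min 1 ν) with hδdef
  have hδpos : 0 < δ := lt_min hτpos (lt_min one_pos hνpos)
  have hδτ : δ ≤ τ := min_le_left _ _
  have hδ1 : δ ≤ 1 := le_trans (min_le_right _ _) (min_le_left _ _)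
  have hδν : δ ≤ ν := le_trans (min_le_right _ _) (min_le_right _ _)
  have hδα : δ ^ α ≤ α * Real.Gamma α / 4 := by
    calc δ ^ α ≤ ν ^ α := Real.rpow_le_rpow hδpos.le hδν hα.le
      _ = α * Real.Gamma α / 4 := Real.rpow_inv_rpow (by positivity) hα.ne'
  -- min point
  obtain ⟨t1, ht1mem, ht1min⟩ := isCompact_Icc.exists_isMinOn
    (nonempty_Icc.2 (by linarith : (0:ℝ) ≤ τ + δ))
    (hcont.mono (Icc_subset_Icc le_rfl (by linarith)))
  set m : ℝ := σ t1 with hmdef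
  have hmneg : m < 0 := by
    obtain ⟨x, hxS, hxlt⟩ := (csInf_lt_iff hSbdd hSne).1 (show τ < τ + δ by linarith)
    have : m ≤ σ x := ht1min ⟨hxS.1, hxlt.le⟩
    linarith [hxS.2]
  have hminle : ∀ x : ℝ, 0 ≤ x → x ≤ τ + δ → m ≤ σ x := fun x h1 h2 => ht1min ⟨h1, h2⟩
  have ht1τ : τ < t1 := by
    by_contra hle
    push_neg at hle
    have := hnn t1 ht1mem.1 hle
    linarith
  have ht1pos : 0 < t1 := lt_trans hτpos ht1τ
  have ht1le : t1 ≤ τ + δ := ht1mem.2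
  -- s1
  set A : Set ℝ := Icc 0 t1 ∩ σ ⁻¹' (Ici 0) with hAdef
  have hAclosed : IsClosed A :=
    ContinuousOn.preimage_isClosed_of_isClosed
      (hcont.mono (Icc_subset_Icc le_rfl (by linarith))) isClosed_Icc isClosed_Ici
  have hAne : A.Nonempty := ⟨τ, ⟨hτ0, ht1τ.le⟩, hτge⟩
  have hAbdd : BddAbove A := ⟨t1, fun x hx => hx.1.2⟩
  set s1 : ℝ := sSup A with hs1def
  have hs1A : s1 ∈ A := hAclosed.csSup_mem hAne hAbdd
  have hs1τ : τ ≤ s1 := le_csSup hAbdd ⟨⟨hτ0, ht1τ.le⟩, hτge⟩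
  have hs1pos : 0 < s1 := lt_of_lt_of_le hτpos hs1τ
  have hs1le : s1 ≤ t1 := hs1A.1.2
  have hσs1 : 0 ≤ σ s1 := hs1A.2
  have hs1t1 : s1 < t1 := by
    rcases eq_or_lt_of_le hs1le with h | h
    · exfalso; rw [h] at hσs1; linarith
    · exact h
  have hnegOn : ∀ r : ℝ, r ∈ Ioo s1 t1 → σ r < 0 := by
    intro r hr
    by_contra hge
    push_neg at hge
    have : r ≤ s1 := le_csSup hAbdd ⟨⟨by linarith [hr.1, hs1pos], hr.2.le⟩, hge⟩
    linarith [hr.1]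
  -- weights
  set W : ℝ → ℝ → ℝ := fun t s => t ^ (1 - β) * ((t - s) ^ (α - 1) * s ^ (β - 1)) with hWdef
  set Q : ℝ → ℝ → ℝ := fun t s => W t s * σ s with hQdef
  obtain ⟨M0, hM0⟩ := isCompact_Icc.exists_bound_of_continuousOn hcont
  have hWnn : ∀ t s : ℝ, 0 < s → s < t → 0 ≤ W t s := by
    intro t s h1 h2
    simp only [hWdef]
    have e1 : (0:ℝ) ≤ t ^ (1 - β) := Real.rpow_nonneg (by linarith) _
    have e2 : (0:ℝ) ≤ (t - s) ^ (α - 1) := Real.rpow_nonneg (by linarith) _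
    have e3 : (0:ℝ) ≤ s ^ (β - 1) := Real.rpow_nonneg h1.le _
    positivity
  have hWint : ∀ t : ℝ, 0 < t → IntegrableOn (W t) (Ioo 0 t) := by
    intro t ht
    simp only [hWdef]
    exact ((beta_integrable hα hα1.le hβ ht).mono_set Ioo_subset_Ioc_self).const_mul _
  have hQint : ∀ t : ℝ, 0 < t → t ≤ τ + δ → IntegrableOn (Q t) (Ioo 0 t) := by
    intro t ht htle
    have hcσ : ContinuousOn σ (Ioo 0 t) :=
      hcont.mono (fun x hx => ⟨hx.1.le, by linarith [hx.2]⟩)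
    have hcQ : ContinuousOn (Q t) (Ioo 0 t) := by
      simp only [hQdef, hWdef]
      exact (continuousOn_const.mul beta_contOn).mul hcσ
    refine Integrable.mono' ((hWint t ht).mul_const M0)
      (hcQ.aestronglyMeasurable measurableSet_Ioo) ?_
    filter_upwards [ae_restrict_mem measurableSet_Ioo] with s hs
    have hW0 : 0 ≤ W t s := hWnn t s hs.1 hs.2
    have hσb : ‖σ s‖ ≤ M0 := hM0 s ⟨hs.1.le, by linarith [hs.2]⟩
    calc ‖Q t s‖ = W t s * ‖σ s‖ := by
          simp only [hQdef]
          rw [norm_mul, Real.norm_eq_abs (W t s), abs_of_nonneg hW0]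
      _ ≤ W t s * M0 := mul_le_mul_of_nonneg_left hσb hW0
  have hJ : ∀ t : ℝ, 0 < t → t ^ (1 - β) * I t = ∫ s in Ioo 0 t, Q t s := by
    intro t ht
    rw [hIdef]
    simp only [hQdef, hWdef]
    rw [← MeasureTheory.integral_const_mul]
    congr 1
    funext s
    ring
  have hK : 0 < Real.Gamma α * Real.Gamma β / Real.Gamma (α + β) := by
    have := Real.Gamma_pos_of_pos (show (0:ℝ) < α + β by linarith)
    positivity
  have hWval : ∀ t : ℝ, 0 < t → (∫ s in Ioo 0 t, W t s) =
      (Real.Gamma α * Real.Gamma β / Real.Gamma (α + β)) * t ^ α := by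
    intro t ht
    have hpow : t ^ (1 - β) * t ^ (α + β - 1) = t ^ α := by
      rw [← Real.rpow_add ht]; congr 1; ring
    simp only [hWdef]
    rw [MeasureTheory.integral_const_mul, beta_value hα hβ ht,
      show t ^ (1 - β) * (Real.Gamma α * Real.Gamma β / Real.Gamma (α + β) * t ^ (α + β - 1)) =
        (Real.Gamma α * Real.Gamma β / Real.Gamma (α + β)) * (t ^ (1 - β) * t ^ (α + β - 1)) by
          ring, hpow]
  have hsplit : ∀ f : ℝ → ℝ, IntegrableOn f (Ioo 0 t1) →
      (∫ s in Ioo 0 t1, f s) = (∫ s in Ioo 0 s1, f s) + ∫ s in Ioo s1 t1, f s := by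
    intro f hf
    have hu : Ioo 0 s1 ∪ Ico s1 t1 = Ioo 0 t1 := Ioo_union_Ico_eq_Ioo hs1pos hs1le
    have hdisj : Disjoint (Ioo (0:ℝ) s1) (Ico s1 t1) := by
      rw [Set.disjoint_left]
      intro x hx1 hx2
      exact absurd hx2.1 (not_le.2 hx1.2)
    rw [← hu, MeasureTheory.setIntegral_union hdisj measurableSet_Ico
      (hf.mono_set (by rw [← hu]; exact subset_union_left))
      (hf.mono_set (by rw [← hu]; exact subset_union_right)),
      MeasureTheory.integral_Ico_eq_integral_Ioo]
  -- integrabilities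
  have hQs1int : IntegrableOn (Q s1) (Ioo 0 s1) := hQint s1 hs1pos (by linarith)
  have hQt1intfull : IntegrableOn (Q t1) (Ioo 0 t1) := hQint t1 ht1pos (by linarith)
  have hQt1int : IntegrableOn (Q t1) (Ioo 0 s1) :=
    hQt1intfull.mono_set (Ioo_subset_Ioo le_rfl hs1le)
  have hWs1int : IntegrableOn (W s1) (Ioo 0 s1) := hWint s1 hs1pos
  have hWt1intfull : IntegrableOn (W t1) (Ioo 0 t1) := hWint t1 ht1pos
  have hWt1int : IntegrableOn (W t1) (Ioo 0 s1) :=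
    hWt1intfull.mono_set (Ioo_subset_Ioo le_rfl hs1le)
  -- the A-term bound
  set c : ℝ := (∫ s in Ioo 0 s1, W s1 s) - ∫ s in Ioo 0 s1, W t1 s with hcdef
  have hkermono : ∀ s : ℝ, s ∈ Ioo 0 s1 → W t1 s ≤ W s1 s := by
    intro s hs
    simp only [hWdef]
    rw [← mul_assoc, ← mul_assoc]
    exact mul_le_mul_of_nonneg_right (kernel_mono hα hα1 hβ hβ1 hαβ hs.1 hs.2 hs1le)
      (Real.rpow_nonneg hs.1.le _)
  have hAterm : (∫ s in Ioo 0 s1, Q s1 s) - (∫ s in Ioo 0 s1, Q t1 s) ≥ m * c := by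
    have h0 : 0 ≤ ∫ s in Ioo 0 s1, (W s1 s - W t1 s) * (σ s - m) := by
      apply MeasureTheory.setIntegral_nonneg measurableSet_Ioo
      intro s hs
      apply mul_nonneg (sub_nonneg.2 (hkermono s hs))
      have : m ≤ σ s := hminle s hs.1.le (by linarith [hs.2])
      linarith
    have hexp : (∫ s in Ioo 0 s1, (W s1 s - W t1 s) * (σ s - m)) =
        ((∫ s in Ioo 0 s1, Q s1 s) - ∫ s in Ioo 0 s1, Q t1 s) - m * c := by
      have e1 : (fun s => (W s1 s - W t1 s) * (σ s - m)) =
          fun s => (Q s1 s - Q t1 s) - m * (W s1 s - W t1 s) := by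
        funext s
        simp only [hQdef]
        ring
      have hsub1 : Integrable (fun s => Q s1 s - Q t1 s) (volume.restrict (Ioo 0 s1)) :=
        hQs1int.sub hQt1int
      have hsub2 : Integrable (fun s => m * (W s1 s - W t1 s)) (volume.restrict (Ioo 0 s1)) :=
        (hWs1int.sub hWt1int).const_mul m
      rw [e1, MeasureTheory.integral_sub hsub1 hsub2,
        MeasureTheory.integral_sub hQs1int hQt1int, MeasureTheory.integral_const_mul,
        MeasureTheory.integral_sub hWs1int hWt1int, hcdef]
    linarith [hexp ▸ h0]
  -- the B-term bound
  have hBterm : (∫ s in Ioo s1 t1, Q t1 s) ≤ 0 := by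
    apply MeasureTheory.setIntegral_nonpos measurableSet_Ioo
    intro s hs
    have hW0 : 0 ≤ W t1 s := hWnn t1 s (by linarith [hs.1, hs1pos]) hs.2
    have hσneg : σ s < 0 := hnegOn s hs
    simp only [hQdef]
    exact mul_nonpos_iff.2 (Or.inl ⟨hW0, hσneg.le⟩)
  -- tail bound for W t1
  have htail_int : IntegrableOn (fun s : ℝ => (t1 - s) ^ (α - 1)) (Ioo s1 t1) := by
    have h0 : IntervalIntegrable (fun x : ℝ => x ^ (α - 1)) volume 0 (t1 - s1) :=
      intervalIntegral.intervalIntegrable_rpow' (by linarith)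
    have h3 := (h0.comp_sub_left t1).symm
    rw [show t1 - (t1 - s1) = s1 by ring, sub_zero] at h3
    rw [intervalIntegrable_iff_integrableOn_Ioc_of_le hs1le] at h3
    rw [← integrableOn_Ioc_iff_integrableOn_Ioo]
    exact h3
  have htail_val : (∫ s in Ioo s1 t1, (t1 - s) ^ (α - 1)) = (t1 - s1) ^ α / α := by
    rw [← MeasureTheory.integral_Ioc_eq_integral_Ioo,
      ← intervalIntegral.integral_of_le hs1le]
    rw [intervalIntegral.integral_comp_sub_left (fun u : ℝ => u ^ (α - 1)) t1]
    rw [sub_self, integral_rpow (Or.inl (by linarith))]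
    rw [Real.zero_rpow (by linarith : α - 1 + 1 ≠ 0), show α - 1 + 1 = α by ring]
    ring
  have hWtail : (∫ s in Ioo s1 t1, W t1 s) ≤
      t1 ^ (1 - β) * s1 ^ (β - 1) * ((t1 - s1) ^ α / α) := by
    have hmono : ∀ s : ℝ, s ∈ Ioo s1 t1 →
        W t1 s ≤ t1 ^ (1 - β) * s1 ^ (β - 1) * (t1 - s) ^ (α - 1) := by
      intro s hs
      simp only [hWdef]
      have h1 : s ^ (β - 1) ≤ s1 ^ (β - 1) :=
        Real.rpow_le_rpow_of_nonpos hs1pos hs.1.le (by linarith)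
      have h2 : (0:ℝ) ≤ (t1 - s) ^ (α - 1) := (Real.rpow_pos_of_pos (by linarith [hs.2]) _).le
      have h3 : (0:ℝ) ≤ t1 ^ (1 - β) := Real.rpow_nonneg ht1pos.le _
      calc t1 ^ (1 - β) * ((t1 - s) ^ (α - 1) * s ^ (β - 1))
          ≤ t1 ^ (1 - β) * ((t1 - s) ^ (α - 1) * s1 ^ (β - 1)) := by
            apply mul_le_mul_of_nonneg_left (mul_le_mul_of_nonneg_left h1 h2) h3
        _ = t1 ^ (1 - β) * s1 ^ (β - 1) * (t1 - s) ^ (α - 1) := by ring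
    calc (∫ s in Ioo s1 t1, W t1 s)
        ≤ ∫ s in Ioo s1 t1, t1 ^ (1 - β) * s1 ^ (β - 1) * (t1 - s) ^ (α - 1) :=
          MeasureTheory.setIntegral_mono_on
            (hWt1intfull.mono_set (Ioo_subset_Ioo hs1pos.le le_rfl))
            (htail_int.const_mul _) measurableSet_Ioo hmono
      _ = t1 ^ (1 - β) * s1 ^ (β - 1) * ((t1 - s1) ^ α / α) := by
          rw [MeasureTheory.integral_const_mul, htail_val]
  -- bound c
  have hcle : c ≤ 2 * δ ^ α / α := by
    have hsplitW := hsplit (W t1) hWt1intfull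
    have h1 : (∫ s in Ioo 0 s1, W t1 s) =
        (Real.Gamma α * Real.Gamma β / Real.Gamma (α + β)) * t1 ^ α -
          ∫ s in Ioo s1 t1, W t1 s := by
      rw [← hWval t1 ht1pos]
      linarith [hsplitW]
    have h2 : c ≤ ∫ s in Ioo s1 t1, W t1 s := by
      rw [hcdef, h1, hWval s1 hs1pos]
      have : s1 ^ α ≤ t1 ^ α := Real.rpow_le_rpow hs1pos.le hs1le hα.le
      nlinarith [hK]
    have hfac : t1 ^ (1 - β) * s1 ^ (β - 1) ≤ 2 := by
      have ht12s : t1 ≤ 2 * s1 := by linarith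
      have e1 : t1 ^ (1 - β) ≤ (2 * s1) ^ (1 - β) :=
        Real.rpow_le_rpow ht1pos.le ht12s (by linarith)
      have e2 : ((2:ℝ) * s1) ^ (1 - β) = 2 ^ (1 - β) * s1 ^ (1 - β) :=
        Real.mul_rpow (by norm_num) hs1pos.le
      have e3 : s1 ^ (1 - β) * s1 ^ (β - 1) = 1 := by
        rw [← Real.rpow_add hs1pos, show 1 - β + (β - 1) = 0 by ring, Real.rpow_zero]
      have e4 : (2:ℝ) ^ (1 - β) ≤ 2 := by
        calc (2:ℝ) ^ (1 - β) ≤ (2:ℝ) ^ (1:ℝ) :=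
              Real.rpow_le_rpow_of_exponent_le one_le_two (by linarith)
          _ = 2 := Real.rpow_one 2
      have hs1b : 0 < s1 ^ (β - 1) := Real.rpow_pos_of_pos hs1pos _
      calc t1 ^ (1 - β) * s1 ^ (β - 1) ≤ 2 ^ (1 - β) * s1 ^ (1 - β) * s1 ^ (β - 1) := by
            rw [← e2]
            exact mul_le_mul_of_nonneg_right e1 hs1b.le
        _ = 2 ^ (1 - β) * (s1 ^ (1 - β) * s1 ^ (β - 1)) := by ring
        _ = 2 ^ (1 - β) := by rw [e3, mul_one]
        _ ≤ 2 := e4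
    have hpow2 : (t1 - s1) ^ α ≤ δ ^ α :=
      Real.rpow_le_rpow (by linarith) (by linarith) hα.le
    have htail2 : t1 ^ (1 - β) * s1 ^ (β - 1) * ((t1 - s1) ^ α / α) ≤ 2 * δ ^ α / α := by
      have hnn1 : (0:ℝ) ≤ (t1 - s1) ^ α / α := by
        apply div_nonneg (Real.rpow_nonneg (by linarith) _) hα.le
      have hd1 : (t1 - s1) ^ α / α ≤ δ ^ α / α := by
        rw [div_le_div_iff_of_pos_right hα]
        exact hpow2
      calc t1 ^ (1 - β) * s1 ^ (β - 1) * ((t1 - s1) ^ α / α) ≤ 2 * ((t1 - s1) ^ α / α) :=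
            mul_le_mul_of_nonneg_right hfac hnn1
        _ ≤ 2 * (δ ^ α / α) := by linarith
        _ = 2 * δ ^ α / α := by ring
    linarith [hWtail]
  -- final contradiction
  have hg : (0:ℝ) < 1 / Real.Gamma α := by positivity
  have hm1 : m = 1 / Real.Gamma β - (1 / Real.Gamma α) *
      ((∫ s in Ioo 0 s1, Q t1 s) + ∫ s in Ioo s1 t1, Q t1 s) := by
    rw [hmdef, hEq t1 ht1pos, hJ t1 ht1pos, hsplit (Q t1) hQt1intfull]
  have hm2 : σ s1 = 1 / Real.Gamma β - (1 / Real.Gamma α) * ∫ s in Ioo 0 s1, Q s1 s := by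
    rw [hEq s1 hs1pos, hJ s1 hs1pos]
  have hkey : m ≥ (1 / Real.Gamma α) * (m * c) := by
    have hdiff : m - σ s1 = (1 / Real.Gamma α) *
        ((∫ s in Ioo 0 s1, Q s1 s) - (∫ s in Ioo 0 s1, Q t1 s) - ∫ s in Ioo s1 t1, Q t1 s) := by
      rw [hm1, hm2]
      ring
    have hge : (∫ s in Ioo 0 s1, Q s1 s) - (∫ s in Ioo 0 s1, Q t1 s) -
        (∫ s in Ioo s1 t1, Q t1 s) ≥ m * c := by
      linarith [hAterm, hBterm]
    have := mul_le_mul_of_nonneg_left hge hg.le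
    linarith [hσs1, hdiff ▸ this]
  have hq : (1 / Real.Gamma α) * c ≤ 1 / 2 := by
    have hc2 : c ≤ Real.Gamma α / 2 := by
      have h4 : 2 * δ ^ α / α ≤ Real.Gamma α / 2 := by
        rw [div_le_div_iff₀ (by positivity) (by norm_num)]
        nlinarith [hδα]
      linarith [hcle]
    rw [show (1 / Real.Gamma α) * c = c / Real.Gamma α by ring, div_le_iff₀ hGα]
    linarith
  have hfin : m ≥ m * ((1 / Real.Gamma α) * c) := by
    calc m ≥ (1 / Real.Gamma α) * (m * c) := hkey
      _ = m * ((1 / Real.Gamma α) * c) := by ring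
  nlinarith [mul_pos (neg_pos.2 hmneg) (show (0:ℝ) < 1 - (1 / Real.Gamma α) * c by linarith)]

lemma ML_nonneg {α β : ℝ} (hα : 0 < α) (hα1 : α < 1) (hβ : 0 < β) (hβ1 : β ≤ 1)
    (hαβ : α ≤ β) : ∀ x : ℝ, 0 ≤ x → 0 ≤ mittagLefflerR α β (-x) := by
  intro x hx
  have h := sigma_nonneg hα hα1 hβ hβ1 hαβ (x ^ (α⁻¹)) (Real.rpow_nonneg hx _)
  rwa [Real.rpow_inv_rpow hx hα.ne'] at h

lemma ML_plus_nonneg {α β : ℝ} (hα : 0 < α) (hα1 : α < 1) (hβ : 0 < β) (hβ1 : β ≤ 1)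
    (hαβ : α ≤ β) : ∀ x : ℝ, 0 ≤ x → 0 ≤ mittagLefflerR α (β + α) (-x) := by
  intro x hx
  rcases eq_or_lt_of_le hx with h | h
  · rw [← h, neg_zero, ML_zero]
    have := Real.Gamma_pos_of_pos (show (0:ℝ) < β + α by linarith)
    positivity
  · set t : ℝ := x ^ (α⁻¹) with htdef
    have ht : 0 < t := Real.rpow_pos_of_pos h _
    have htx : t ^ α = x := Real.rpow_inv_rpow hx hα.ne'
    have hstar := star hα hα1 hβ ht
    have hnn : 0 ≤ ∫ s in Ioo 0 t,
        (t - s) ^ (α - 1) * s ^ (β - 1) * mittagLefflerR α β (-(s ^ α)) := by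
      apply MeasureTheory.setIntegral_nonneg measurableSet_Ioo
      intro s hs
      have h1 : (0:ℝ) ≤ (t - s) ^ (α - 1) := Real.rpow_nonneg (by linarith [hs.2]) _
      have h2 : (0:ℝ) ≤ s ^ (β - 1) := Real.rpow_nonneg hs.1.le _
      have h3 : 0 ≤ mittagLefflerR α β (-(s ^ α)) :=
        ML_nonneg hα hα1 hβ hβ1 hαβ (s ^ α) (Real.rpow_nonneg hs.1.le _)
      positivity
    rw [hstar] at hnn
    have hpos : 0 < Real.Gamma α * t ^ (α + β - 1) := by
      have := Real.Gamma_pos_of_pos hα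
      have := Real.rpow_pos_of_pos ht (α + β - 1)
      positivity
    by_contra hneg
    push_neg at hneg
    rw [htx] at hnn
    nlinarith

theorem mittagLeffler_le_general {α β : ℝ} (hα : 0 < α) (hα1 : α < 1) (hβ : 0 < β)
    (hβ1 : β ≤ 1) (hαβ : α ≤ β) : ∀ w : ℝ, w ≤ 0 →
    mittagLefflerR α β w ≤ 1 / Real.Gamma β := by
  intro w hw
  rw [ML_shift hα hα1.le hβ w]
  have h := ML_plus_nonneg hα hα1 hβ hβ1 hαβ (-w) (by linarith)
  rw [neg_neg] at h
  have : w * mittagLefflerR α (β + α) w ≤ 0 := mul_nonpos_iff.2 (Or.inr ⟨hw, h⟩)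
  linarith

end MLaux

theorem mittagLeffler_le_of_nonpos (α β : ℝ) (hα : α ∈ Set.Ioo (0 : ℝ) 1)
    (hβ : β ∈ Set.Ioc (0 : ℝ) 1) (hβα : α ≤ β) :
    (∀ w : ℝ, w ≤ 0 → mittagLefflerR α β w ≤ 1 / Real.Gamma β) ∧
      (∀ w : ℝ, w ≤ 0 → mittagLefflerR α 1 w ≤ 1) := by
  obtain ⟨hα0, hα1⟩ := hα
  obtain ⟨hβ0, hβ1⟩ := hβ
  constructor
  · exact MLaux.mittagLeffler_le_general hα0 hα1 hβ0 hβ1 hβα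
  · intro w hw
    have h := MLaux.mittagLeffler_le_general hα0 hα1 one_pos le_rfl hα1.le w hw
    rwa [Real.Gamma_one, div_one] at h
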